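/- (Γ-limsup inequality, general case) Suppose ε_p > 0 satisfies ε_p^{1/p} → 0 as p → ∞. Then for every γ ∈ Π(μ,ν) there exists a sequence γ_p ∈ Π(μ,ν) converging weakly-star to γ such that limsup_{p→∞} J_{p,ε_p}(γ_p) ≤ J_∞(γ). -/

import Mathlib

open MeasureTheory ENNReal Filter
open scoped Classical

noncomputable section

/-- ℝ^d with its Euclidean structure. -/
abbrev Rd (d : ℕ) := EuclideanSpace ℝ (Fin d)

/-- γ ∈ Π(μ,ν): γ has first marginal μ and second marginal ν. -/
def IsCoupling {E F : Type*} [MeasurableSpace E] [MeasurableSpace F]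
    (γ : Measure (E × F)) (μ : Measure E) (ν : Measure F) : Prop :=
  γ.map Prod.fst = μ ∧ γ.map Prod.snd = ν

/-- Relative entropy H(γ|ρ) = ∫ log(dγ/dρ) dγ if γ ≪ ρ (and the integral exists), +∞ otherwise. -/
def relEntropy {E : Type*} [MeasurableSpace E] (γ ρ : Measure E) : ℝ≥0∞ :=
  if γ ≪ ρ ∧ Integrable (llr γ ρ) γ then ENNReal.ofReal (∫ z, llr γ ρ z ∂γ) else ∞

/-- The entropic functional J_{p,ε}(γ) = (∫ c^p dγ + ε H(γ|μ⊗ν))^{1/p} on Π(μ,ν), +∞ outside. -/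
def Jpe {d : ℕ} (c : Rd d × Rd d → ℝ) (μ ν : Measure (Rd d)) (p ε : ℝ)
    (γ : Measure (Rd d × Rd d)) : ℝ≥0∞ :=
  if IsCoupling γ μ ν then
    (∫⁻ z, ENNReal.ofReal (c z ^ p) ∂γ + ENNReal.ofReal ε * relEntropy γ (μ.prod ν)) ^ (1 / p)
  else ∞

/-- The supremal functional J_∞(γ) = γ-ess sup c on Π(μ,ν), +∞ outside. -/
def Jinf {d : ℕ} (c : Rd d × Rd d → ℝ) (μ ν : Measure (Rd d))
    (γ : Measure (Rd d × Rd d)) : ℝ≥0∞ :=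
  if IsCoupling γ μ ν then essSup (fun z => ENNReal.ofReal (c z)) γ else ∞

/-- Weak-star convergence of a family of (probability) measures, as the real parameter p → ∞. -/
def WeakStarTendsto {E : Type*} [MeasurableSpace E] [TopologicalSpace E]
    (γ : ℝ → Measure E) (γ₀ : Measure E) : Prop :=
  ∀ f : BoundedContinuousFunction E ℝ,
    Tendsto (fun p => ∫ z, f z ∂(γ p)) atTop (nhds (∫ z, f z ∂γ₀))

/-- The support of a Borel measure: points all of whose neighborhoods have positive measure. -/
def msupport {E : Type*} [MeasurableSpace E] [TopologicalSpace E] (μ : Measure E) : Set E :=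
  {x | ∀ U ∈ nhds x, μ U ≠ 0}

lemma msupport_compl_null {E : Type*} [MeasurableSpace E] [TopologicalSpace E]
    [SecondCountableTopology E] (μ : Measure E) :
    μ (msupport μ)ᶜ = 0 := by
  set S : Set (Set E) := {V | IsOpen V ∧ μ V = 0} with hS
  obtain ⟨T, hTc, hTS, hTU⟩ := TopologicalSpace.isOpen_sUnion_countable S (fun V hV => hV.1)
  have hsub : (msupport μ)ᶜ ⊆ ⋃₀ S := by
    intro x hx
    simp only [msupport, Set.mem_compl_iff, Set.mem_setOf_eq, not_forall] at hx
    obtain ⟨U, hU, hU0⟩ := hx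
    push_neg at hU0
    obtain ⟨V, hVU, hVopen, hxV⟩ := mem_nhds_iff.mp hU
    exact ⟨V, ⟨hVopen, measure_mono_null hVU hU0⟩, hxV⟩
  have : μ (⋃₀ T) = 0 := (measure_sUnion_null_iff hTc).mpr (fun s hs => (hTS hs).2)
  exact measure_mono_null (hTU ▸ hsub) this

lemma exists_partition {d : ℕ} (K : Set (Rd d)) (hK : IsCompact K) (η : ℝ) (hη : 0 < η) :
    ∃ (m : ℕ) (A : Fin m → Set (Rd d)),
      (∀ i, MeasurableSet (A i)) ∧
      (∀ i j, i ≠ j → Disjoint (A i) (A j)) ∧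
      (⋃ i, A i) = K ∧
      (∀ i, ∀ x ∈ A i, ∀ y ∈ A i, dist x y < η) := by
  have hcov : K ⊆ ⋃ x : Rd d, Metric.ball x (η/2) := by
    intro x _; exact Set.mem_iUnion.mpr ⟨x, Metric.mem_ball_self (by linarith)⟩
  obtain ⟨t, ht⟩ := hK.elim_finite_subcover (fun x : Rd d => Metric.ball x (η/2))
    (fun x => Metric.isOpen_ball) hcov
  set m := t.card with hm
  set e := t.equivFin with he
  set ctr : Fin m → Rd d := fun i => (e.symm i : Rd d) with hctr
  set A : Fin m → Set (Rd d) :=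
    fun i => (K ∩ Metric.ball (ctr i) (η/2)) \ ⋃ j : {j : Fin m // j < i}, Metric.ball (ctr j) (η/2)
    with hA
  refine ⟨m, A, ?_, ?_, ?_, ?_⟩
  · intro i
    refine (hK.isClosed.measurableSet.inter Metric.isOpen_ball.measurableSet).diff ?_
    exact MeasurableSet.iUnion (fun j => Metric.isOpen_ball.measurableSet)
  · intro i j hij
    rcases lt_or_gt_of_ne hij with h | h
    · refine Set.disjoint_left.mpr (fun z hz hz' => ?_)
      exact hz'.2 (Set.mem_iUnion.mpr ⟨⟨i, h⟩, hz.1.2⟩)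
    · refine Set.disjoint_left.mpr (fun z hz hz' => ?_)
      exact hz.2 (Set.mem_iUnion.mpr ⟨⟨j, h⟩, hz'.1.2⟩)
  · apply Set.Subset.antisymm
    · exact Set.iUnion_subset (fun i => (Set.diff_subset).trans Set.inter_subset_left)
    · intro y hy
      have : ∃ i : Fin m, y ∈ Metric.ball (ctr i) (η/2) := by
        obtain ⟨x, hx, hyx⟩ := Set.mem_iUnion₂.mp (ht hy)
        exact ⟨e ⟨x, hx⟩, by simpa [hctr] using hyx⟩
      classical
      obtain ⟨i, hi, hmin⟩ := Finset.exists_min_image (Finset.univ.filter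
        (fun i => y ∈ Metric.ball (ctr i) (η/2))) id (by
          obtain ⟨i, hi⟩ := this
          exact ⟨i, Finset.mem_filter.mpr ⟨Finset.mem_univ _, hi⟩⟩)
      refine Set.mem_iUnion.mpr ⟨i, ⟨⟨hy, (Finset.mem_filter.mp hi).2⟩, ?_⟩⟩
      intro hmem
      obtain ⟨⟨j, hji⟩, hj⟩ := Set.mem_iUnion.mp hmem
      have := hmin j (Finset.mem_filter.mpr ⟨Finset.mem_univ _, hj⟩)
      exact absurd hji (not_lt.mpr this)
  · intro i x hx y hy
    have hx' := hx.1.2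
    have hy' := hy.1.2
    calc dist x y ≤ dist x (ctr i) + dist (ctr i) y := dist_triangle _ _ _
    _ < η/2 + η/2 := by
        rw [Metric.mem_ball] at hx' hy'
        rw [dist_comm (ctr i) y] at *
        linarith
    _ = η := by ring


lemma block_approx {d : ℕ} (c : Rd d × Rd d → ℝ) (hc0 : ∀ z, 0 ≤ c z)
    (μ ν : Measure (Rd d)) [IsProbabilityMeasure μ] [IsProbabilityMeasure ν]
    (hμ : IsCompact (msupport μ)) (hν : IsCompact (msupport ν))
    (γ : Measure (Rd d × Rd d)) [IsProbabilityMeasure γ] (hγC : IsCoupling γ μ ν)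
    (η τ : ℝ) (hη : 0 < η) (hτ : 0 ≤ τ)
    (hcτ : ∀ z ∈ msupport μ ×ˢ msupport ν, ∀ z' ∈ msupport μ ×ˢ msupport ν,
      dist z z' < η → |c z - c z'| ≤ τ) :
    ∃ γ' : Measure (Rd d × Rd d),
      IsProbabilityMeasure γ' ∧ IsCoupling γ' μ ν ∧
      (∃ Lc : ℝ, 1 ≤ Lc ∧ relEntropy γ' (μ.prod ν) ≤ ENNReal.ofReal Lc) ∧
      (∀ᵐ z ∂γ', ENNReal.ofReal (c z)
          ≤ essSup (fun z => ENNReal.ofReal (c z)) γ + ENNReal.ofReal τ) ∧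
      (∀ (f : BoundedContinuousFunction (Rd d × Rd d) ℝ) (τf : ℝ), 0 ≤ τf →
        (∀ z ∈ msupport μ ×ˢ msupport ν, ∀ z' ∈ msupport μ ×ˢ msupport ν,
          dist z z' < η → |f z - f z'| ≤ τf) →
        |(∫ z, f z ∂γ') - ∫ z, f z ∂γ| ≤ 2 * τf) := by
  set K := msupport μ with hK
  set L := msupport ν with hL
  have hKm : MeasurableSet K := hμ.isClosed.measurableSet
  have hLm : MeasurableSet L := hν.isClosed.measurableSet
  have hKc : μ Kᶜ = 0 := msupport_compl_null μ
  have hLc : ν Lᶜ = 0 := msupport_compl_null ν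
  obtain ⟨m, A, hAm, hAd, hAU, hAdiam⟩ := exists_partition K hμ η hη
  obtain ⟨n, B, hBm, hBd, hBU, hBdiam⟩ := exists_partition L hν η hη
  set ι := Fin m × Fin n with hι
  set blk : ι → Set (Rd d × Rd d) := fun ij => A ij.1 ×ˢ B ij.2 with hblk
  have hblkm : ∀ ij, MeasurableSet (blk ij) := fun ij => (hAm ij.1).prod (hBm ij.2)
  have hblkd : ∀ ij kl : ι, ij ≠ kl → Disjoint (blk ij) (blk kl) := by
    intro ij kl hne
    have : ij.1 ≠ kl.1 ∨ ij.2 ≠ kl.2 := by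
      by_contra h
      push_neg at h
      exact hne (Prod.ext h.1 h.2)
    rcases this with h | h
    · exact Set.disjoint_left.mpr fun z hz hz' =>
        Set.disjoint_left.mp (hAd _ _ h) hz.1 hz'.1
    · exact Set.disjoint_left.mpr fun z hz hz' =>
        Set.disjoint_left.mp (hBd _ _ h) hz.2 hz'.2
  -- preimage facts
  have hpre_fst : ∀ s : Set (Rd d), Prod.fst ⁻¹' s = s ×ˢ (Set.univ : Set (Rd d)) := by
    intro s; ext z; simp [Set.mem_prod]
  have hpre_snd : ∀ s : Set (Rd d), Prod.snd ⁻¹' s = (Set.univ : Set (Rd d)) ×ˢ s := by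
    intro s; ext z; simp [Set.mem_prod]
  have hfst : ∀ s : Set (Rd d), MeasurableSet s → γ (s ×ˢ Set.univ) = μ s := by
    intro s hs
    rw [← hpre_fst, ← Measure.map_apply measurable_fst hs, hγC.1]
  have hsnd : ∀ s : Set (Rd d), MeasurableSet s → γ (Set.univ ×ˢ s) = ν s := by
    intro s hs
    rw [← hpre_snd, ← Measure.map_apply measurable_snd hs, hγC.2]
  set coeff : ι → ℝ≥0∞ := fun ij => γ (blk ij) / (μ (A ij.1) * ν (B ij.2)) with hcoeff
  set pm : ι → Measure (Rd d × Rd d) :=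
    fun ij => (μ.restrict (A ij.1)).prod (ν.restrict (B ij.2)) with hpmdef
  have hpm : ∀ ij, pm ij = (μ.prod ν).restrict (blk ij) := fun ij =>
    Measure.prod_restrict _ _
  set γ' : Measure (Rd d × Rd d) := ∑ ij : ι, coeff ij • pm ij with hγ'
  -- block mass bounds
  have hγA : ∀ ij : ι, γ (blk ij) ≤ μ (A ij.1) := by
    intro ij
    rw [← hfst _ (hAm ij.1)]
    exact measure_mono (Set.prod_mono_right (Set.subset_univ _))
  have hγB : ∀ ij : ι, γ (blk ij) ≤ ν (B ij.2) := by
    intro ij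
    rw [← hsnd _ (hBm ij.2)]
    exact measure_mono (Set.prod_mono_left (Set.subset_univ _))
  have hden_ne_top : ∀ ij : ι, μ (A ij.1) * ν (B ij.2) ≠ ∞ :=
    fun ij => ENNReal.mul_ne_top (measure_ne_top _ _) (measure_ne_top _ _)
  have hcoeff_zero : ∀ ij : ι, γ (blk ij) = 0 → coeff ij = 0 := by
    intro ij h; simp [hcoeff, h]
  have hcoeff_ne_top : ∀ ij : ι, coeff ij ≠ ∞ := by
    intro ij
    by_cases hd : μ (A ij.1) * ν (B ij.2) = 0
    · have : γ (blk ij) = 0 := by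
        rcases mul_eq_zero.mp hd with h | h
        · exact le_antisymm (h ▸ hγA ij) (zero_le)
        · exact le_antisymm (h ▸ hγB ij) (zero_le)
      simp [hcoeff, this]
    · exact (ENNReal.div_lt_top (measure_ne_top _ _) hd).ne
  have hcoeff_mass : ∀ ij : ι, coeff ij * (μ (A ij.1) * ν (B ij.2)) = γ (blk ij) := by
    intro ij
    by_cases hd : μ (A ij.1) * ν (B ij.2) = 0
    · have : γ (blk ij) = 0 := by
        rcases mul_eq_zero.mp hd with h | h
        · exact le_antisymm (h ▸ hγA ij) (zero_le)
        · exact le_antisymm (h ▸ hγB ij) (zero_le)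
      simp [hcoeff, this, hd]
    · exact ENNReal.div_mul_cancel hd (hden_ne_top ij)
  -- sum of block masses in a row / column
  have hrow : ∀ i : Fin m, (∑ j : Fin n, γ (A i ×ˢ B j)) = μ (A i) := by
    intro i
    have hdisj : Pairwise (Function.onFun Disjoint fun j : Fin n => A i ×ˢ B j) := by
      intro j k hjk
      exact Set.disjoint_left.mpr fun z hz hz' =>
        Set.disjoint_left.mp (hBd _ _ hjk) hz.2 hz'.2
    have hUeq : (⋃ j : Fin n, A i ×ˢ B j) = A i ×ˢ L := by
      rw [← hBU, Set.prod_iUnion]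
    have h1 : (∑ j : Fin n, γ (A i ×ˢ B j)) = γ (A i ×ˢ L) := by
      rw [← hUeq, measure_iUnion hdisj (fun j => (hAm i).prod (hBm j)), tsum_fintype]
    have h2 : γ (A i ×ˢ L) = γ (A i ×ˢ Set.univ) := by
      apply le_antisymm (measure_mono (Set.prod_mono_right (Set.subset_univ _)))
      calc γ (A i ×ˢ Set.univ) ≤ γ (A i ×ˢ L ∪ Set.univ ×ˢ Lᶜ) := by
            apply measure_mono
            rintro ⟨x, y⟩ ⟨hx, -⟩
            by_cases hy : y ∈ L
            · exact Or.inl ⟨hx, hy⟩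
            · exact Or.inr ⟨trivial, hy⟩
      _ ≤ γ (A i ×ˢ L) + γ (Set.univ ×ˢ Lᶜ) := measure_union_le _ _
      _ = γ (A i ×ˢ L) := by rw [hsnd _ hLm.compl, hLc, add_zero]
    rw [h1, h2, hfst _ (hAm i)]
  have hcol : ∀ j : Fin n, (∑ i : Fin m, γ (A i ×ˢ B j)) = ν (B j) := by
    intro j
    have hdisj : Pairwise (Function.onFun Disjoint fun i : Fin m => A i ×ˢ B j) := by
      intro i k hik
      exact Set.disjoint_left.mpr fun z hz hz' =>
        Set.disjoint_left.mp (hAd _ _ hik) hz.1 hz'.1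
    have hUeq : (⋃ i : Fin m, A i ×ˢ B j) = K ×ˢ B j := by
      rw [← hAU, Set.iUnion_prod_const]
    have h1 : (∑ i : Fin m, γ (A i ×ˢ B j)) = γ (K ×ˢ B j) := by
      rw [← hUeq, measure_iUnion hdisj (fun i => (hAm i).prod (hBm j)), tsum_fintype]
    have h2 : γ (K ×ˢ B j) = γ (Set.univ ×ˢ B j) := by
      apply le_antisymm (measure_mono (Set.prod_mono_left (Set.subset_univ _)))
      calc γ (Set.univ ×ˢ B j) ≤ γ (K ×ˢ B j ∪ Kᶜ ×ˢ Set.univ) := by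
            apply measure_mono
            rintro ⟨x, y⟩ ⟨-, hy⟩
            by_cases hx : x ∈ K
            · exact Or.inl ⟨hx, hy⟩
            · exact Or.inr ⟨hx, trivial⟩
      _ ≤ γ (K ×ˢ B j) + γ (Kᶜ ×ˢ Set.univ) := measure_union_le _ _
      _ = γ (K ×ˢ B j) := by rw [hfst _ hKm.compl, hKc, add_zero]
    rw [h1, h2, hsnd _ (hBm j)]
  -- first marginal
  have hmargfst : γ'.map Prod.fst = μ := by
    ext s hs
    rw [Measure.map_apply measurable_fst hs, hpre_fst]
    rw [hγ', Measure.finset_sum_apply]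
    have hterm : ∀ ij : ι, (coeff ij • pm ij) (s ×ˢ Set.univ)
        = γ (blk ij) / μ (A ij.1) * μ (s ∩ A ij.1) := by
      intro ij
      rw [Measure.smul_apply, smul_eq_mul, hpmdef]
      rw [Measure.prod_prod, Measure.restrict_apply hs, Measure.restrict_apply MeasurableSet.univ,
        Set.univ_inter]
      by_cases hb : ν (B ij.2) = 0
      · have hγ0 : γ (blk ij) = 0 := le_antisymm (hb ▸ hγB ij) (zero_le)
        simp [hcoeff, hγ0, hb]
      · have hbne : ν (B ij.2) ≠ ∞ := measure_ne_top _ _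
        show γ (blk ij) / (μ (A ij.1) * ν (B ij.2)) * (μ (s ∩ A ij.1) * ν (B ij.2))
            = γ (blk ij) / μ (A ij.1) * μ (s ∩ A ij.1)
        rw [div_eq_mul_inv, div_eq_mul_inv,
          ENNReal.mul_inv (Or.inr hbne) (Or.inl (measure_ne_top _ _))]
        calc γ (blk ij) * ((μ (A ij.1))⁻¹ * (ν (B ij.2))⁻¹) * (μ (s ∩ A ij.1) * ν (B ij.2))
            = γ (blk ij) * (μ (A ij.1))⁻¹ * μ (s ∩ A ij.1) * ((ν (B ij.2))⁻¹ * ν (B ij.2)) := by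
              ring
        _ = γ (blk ij) * (μ (A ij.1))⁻¹ * μ (s ∩ A ij.1) := by
              rw [ENNReal.inv_mul_cancel hb hbne, mul_one]
    calc (∑ ij : ι, (coeff ij • pm ij) (s ×ˢ Set.univ))
        = ∑ i : Fin m, ∑ j : Fin n, γ (A i ×ˢ B j) / μ (A i) * μ (s ∩ A i) := by
          rw [Fintype.sum_prod_type]
          exact Finset.sum_congr rfl fun i _ => Finset.sum_congr rfl fun j _ => hterm (i, j)
    _ = ∑ i : Fin m, μ (s ∩ A i) := by
          refine Finset.sum_congr rfl fun i _ => ?_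
          simp only [div_eq_mul_inv]
          rw [← Finset.sum_mul, ← Finset.sum_mul, hrow i]
          by_cases hA0 : μ (A i) = 0
          · have : μ (s ∩ A i) = 0 :=
              le_antisymm (hA0 ▸ measure_mono Set.inter_subset_right) (zero_le)
            simp [this]
          · rw [ENNReal.mul_inv_cancel hA0 (measure_ne_top _ _), one_mul]
    _ = μ s := by
          have hdisj : Pairwise (Function.onFun Disjoint fun i : Fin m => s ∩ A i) := by
            intro i k hik
            exact Set.disjoint_left.mpr fun z hz hz' =>
              Set.disjoint_left.mp (hAd _ _ hik) hz.2 hz'.2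
          rw [← tsum_fintype (L := SummationFilter.unconditional _), ← measure_iUnion hdisj (fun i => hs.inter (hAm i)),
            ← Set.inter_iUnion, hAU]
          exact measure_inter_conull hKc
  -- second marginal
  have hmargsnd : γ'.map Prod.snd = ν := by
    ext s hs
    rw [Measure.map_apply measurable_snd hs, hpre_snd]
    rw [hγ', Measure.finset_sum_apply]
    have hterm : ∀ ij : ι, (coeff ij • pm ij) (Set.univ ×ˢ s)
        = γ (blk ij) / ν (B ij.2) * ν (s ∩ B ij.2) := by
      intro ij
      rw [Measure.smul_apply, smul_eq_mul, hpmdef]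
      rw [Measure.prod_prod, Measure.restrict_apply hs, Measure.restrict_apply MeasurableSet.univ,
        Set.univ_inter]
      by_cases hb : μ (A ij.1) = 0
      · have hγ0 : γ (blk ij) = 0 := le_antisymm (hb ▸ hγA ij) (zero_le)
        simp [hcoeff, hγ0, hb]
      · have hbne : μ (A ij.1) ≠ ∞ := measure_ne_top _ _
        show γ (blk ij) / (μ (A ij.1) * ν (B ij.2)) * (μ (A ij.1) * ν (s ∩ B ij.2))
            = γ (blk ij) / ν (B ij.2) * ν (s ∩ B ij.2)
        rw [div_eq_mul_inv, div_eq_mul_inv,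
          ENNReal.mul_inv (Or.inl hb) (Or.inl hbne)]
        calc γ (blk ij) * ((μ (A ij.1))⁻¹ * (ν (B ij.2))⁻¹) * (μ (A ij.1) * ν (s ∩ B ij.2))
            = γ (blk ij) * (ν (B ij.2))⁻¹ * ν (s ∩ B ij.2) * ((μ (A ij.1))⁻¹ * μ (A ij.1)) := by
              ring
        _ = γ (blk ij) * (ν (B ij.2))⁻¹ * ν (s ∩ B ij.2) := by
              rw [ENNReal.inv_mul_cancel hb hbne, mul_one]
    calc (∑ ij : ι, (coeff ij • pm ij) (Set.univ ×ˢ s))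
        = ∑ j : Fin n, ∑ i : Fin m, γ (A i ×ˢ B j) / ν (B j) * ν (s ∩ B j) := by
          rw [Fintype.sum_prod_type_right]
          exact Finset.sum_congr rfl fun j _ => Finset.sum_congr rfl fun i _ => hterm (i, j)
    _ = ∑ j : Fin n, ν (s ∩ B j) := by
          refine Finset.sum_congr rfl fun j _ => ?_
          simp only [div_eq_mul_inv]
          rw [← Finset.sum_mul, ← Finset.sum_mul, hcol j]
          by_cases hB0 : ν (B j) = 0
          · have : ν (s ∩ B j) = 0 :=
              le_antisymm (hB0 ▸ measure_mono Set.inter_subset_right) (zero_le)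
            simp [this]
          · rw [ENNReal.mul_inv_cancel hB0 (measure_ne_top _ _), one_mul]
    _ = ν s := by
          have hdisj : Pairwise (Function.onFun Disjoint fun j : Fin n => s ∩ B j) := by
            intro j k hjk
            exact Set.disjoint_left.mpr fun z hz hz' =>
              Set.disjoint_left.mp (hBd _ _ hjk) hz.2 hz'.2
          rw [← tsum_fintype (L := SummationFilter.unconditional _), ← measure_iUnion hdisj (fun j => hs.inter (hBm j)),
            ← Set.inter_iUnion, hBU]
          exact measure_inter_conull hLc
  have hγ'C : IsCoupling γ' μ ν := ⟨hmargfst, hmargsnd⟩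
  have hγ'P : IsProbabilityMeasure γ' := by
    constructor
    have : γ' Set.univ = (γ'.map Prod.fst) Set.univ := by
      rw [Measure.map_apply measurable_fst MeasurableSet.univ, Set.preimage_univ]
    rw [this, hmargfst, measure_univ]
  -- density representation
  set ρfn : Rd d × Rd d → ℝ≥0∞ :=
    fun z => ∑ ij : ι, (blk ij).indicator (fun _ => coeff ij) z with hρfn
  have hρm : Measurable ρfn := by
    apply Finset.measurable_sum
    intro ij _
    exact Measurable.indicator measurable_const (hblkm ij)
  have hwd : (μ.prod ν).withDensity ρfn = γ' := by
    ext s hs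
    rw [withDensity_apply _ hs]
    rw [hρfn]
    rw [lintegral_finset_sum _ (fun ij _ => Measurable.indicator measurable_const (hblkm ij))]
    rw [hγ', Measure.finset_sum_apply]
    refine Finset.sum_congr rfl fun ij _ => ?_
    rw [lintegral_indicator (hblkm ij), Measure.restrict_restrict (hblkm ij),
      setLIntegral_const, Measure.smul_apply, smul_eq_mul, hpm ij,
      Measure.restrict_apply hs, Set.inter_comm]
  have habs : γ' ≪ μ.prod ν := hwd ▸ withDensity_absolutelyContinuous _ _
  have hrn : γ'.rnDeriv (μ.prod ν) =ᵐ[μ.prod ν] ρfn := by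
    rw [← hwd]
    exact Measure.rnDeriv_withDensity _ hρm
  have hρ_on_blk : ∀ ij : ι, ∀ z ∈ blk ij, ρfn z = coeff ij := by
    intro ij z hz
    show (∑ kl : ι, (blk kl).indicator (fun _ => coeff kl) z) = coeff ij
    rw [Finset.sum_eq_single ij]
    · simp [Set.indicator_of_mem hz]
    · intro kl _ hkl
      have : z ∉ blk kl := fun hzk =>
        Set.disjoint_left.mp (hblkd kl ij hkl) hzk hz
      simp [Set.indicator_of_notMem this]
    · intro h; exact absurd (Finset.mem_univ ij) h
  -- a.e. every point is in a block of positive γ-mass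
  have hae_blk : ∀ᵐ z ∂γ', ∃ ij : ι, z ∈ blk ij ∧ γ (blk ij) ≠ 0 := by
    rw [ae_iff]
    set T := {z : Rd d × Rd d | ¬∃ ij : ι, z ∈ blk ij ∧ γ (blk ij) ≠ 0} with hT
    have hTm : MeasurableSet T := by
      have hT' : Tᶜ = ⋃ ij : ι, {z | z ∈ blk ij ∧ γ (blk ij) ≠ 0} := by
        ext z; simp [hT]
      have hmc : MeasurableSet Tᶜ := by
        rw [hT']
        refine MeasurableSet.iUnion fun ij => ?_
        by_cases h : γ (blk ij) = 0
        · have : {z | z ∈ blk ij ∧ γ (blk ij) ≠ 0} = ∅ := by ext z; simp [h]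
          rw [this]; exact MeasurableSet.empty
        · have : {z | z ∈ blk ij ∧ γ (blk ij) ≠ 0} = blk ij := by ext z; simp [h]
          rw [this]; exact hblkm ij
      simpa using hmc.compl
    show γ' T = 0
    rw [hγ', Measure.finset_sum_apply]
    refine Finset.sum_eq_zero fun ij _ => ?_
    rw [Measure.smul_apply, smul_eq_mul]
    by_cases h0 : γ (blk ij) = 0
    · rw [hcoeff_zero ij h0, zero_mul]
    · have hTsub : T ∩ blk ij = ∅ := by
        ext z
        simp only [Set.mem_inter_iff, Set.mem_empty_iff_false, iff_false, not_and]
        intro hzT hzb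
        exact hzT ⟨ij, hzb, h0⟩
      rw [hpm ij, Measure.restrict_apply hTm, hTsub, measure_empty, mul_zero]
  -- entropy bound
  set Creal : ℝ := ∑ ij : ι, |Real.log (coeff ij).toReal| with hCreal
  set g : Rd d × Rd d → ℝ := fun z => Real.log (ρfn z).toReal with hg
  have hg_meas : Measurable g := (hρm.ennreal_toReal).log
  have hllr_ae : llr γ' (μ.prod ν) =ᵐ[γ'] g := by
    have h1 : γ'.rnDeriv (μ.prod ν) =ᵐ[γ'] ρfn := habs.ae_le hrn
    filter_upwards [h1] with z hz
    have h2 : llr γ' (μ.prod ν) z = Real.log ((γ'.rnDeriv (μ.prod ν)) z).toReal := rfl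
    have h3 : g z = Real.log (ρfn z).toReal := rfl
    rw [h2, h3, hz]
  have hg_bound : ∀ᵐ z ∂γ', |g z| ≤ Creal := by
    filter_upwards [hae_blk] with z hz
    obtain ⟨ij, hzb, -⟩ := hz
    rw [hg]
    simp only
    rw [hρ_on_blk ij z hzb]
    exact Finset.single_le_sum (f := fun kl : ι => |Real.log (coeff kl).toReal|)
      (fun kl _ => abs_nonneg _) (Finset.mem_univ ij)
  have hg_int : Integrable g γ' := by
    refine Integrable.mono' (integrable_const Creal) hg_meas.aestronglyMeasurable ?_
    filter_upwards [hg_bound] with z hz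
    simpa using hz
  have hllr_int : Integrable (llr γ' (μ.prod ν)) γ' := hg_int.congr hllr_ae.symm
  have hEnt : relEntropy γ' (μ.prod ν) ≤ ENNReal.ofReal (max Creal 1) := by
    rw [relEntropy, if_pos ⟨habs, hllr_int⟩]
    apply ENNReal.ofReal_le_ofReal
    calc (∫ z, llr γ' (μ.prod ν) z ∂γ') = ∫ z, g z ∂γ' := integral_congr_ae hllr_ae
    _ ≤ ∫ _z, Creal ∂γ' := by
        apply integral_mono_ae hg_int (integrable_const Creal)
        filter_upwards [hg_bound] with z hz
        exact le_trans (le_abs_self _) hz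
    _ = Creal := by rw [integral_const]; simp
    _ ≤ max Creal 1 := le_max_left _ _
  -- blocks are inside K ×ˢ L
  have hAsubK : ∀ i, A i ⊆ K := fun i => hAU ▸ Set.subset_iUnion A i
  have hBsubL : ∀ j, B j ⊆ L := fun j => hBU ▸ Set.subset_iUnion B j
  have hblk_sub : ∀ ij : ι, blk ij ⊆ K ×ˢ L := by
    intro ij z hz
    exact ⟨hAsubK ij.1 hz.1, hBsubL ij.2 hz.2⟩
  have hblk_dist : ∀ ij : ι, ∀ z ∈ blk ij, ∀ z' ∈ blk ij, dist z z' < η := by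
    intro ij z hz z' hz'
    rw [Prod.dist_eq]
    exact max_lt (hAdiam ij.1 _ hz.1 _ hz'.1) (hBdiam ij.2 _ hz.2 _ hz'.2)
  -- cost bound
  set E := essSup (fun z => ENNReal.ofReal (c z)) γ with hE
  have hcost : ∀ᵐ z ∂γ', ENNReal.ofReal (c z) ≤ E + ENNReal.ofReal τ := by
    have hEγ : γ {z | ¬ (ENNReal.ofReal (c z) ≤ E)} = 0 := by
      have := ENNReal.ae_le_essSup (μ := γ) (fun z => ENNReal.ofReal (c z))
      rwa [ae_iff] at this
    filter_upwards [hae_blk] with z hz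
    obtain ⟨ij, hzb, hγpos⟩ := hz
    have hgood : γ (blk ij ∩ {z | ENNReal.ofReal (c z) ≤ E}) ≠ 0 := by
      intro hzero
      apply hγpos
      refine le_antisymm ?_ (zero_le)
      have hsub : blk ij ⊆ (blk ij ∩ {z | ENNReal.ofReal (c z) ≤ E})
          ∪ {z | ¬ (ENNReal.ofReal (c z) ≤ E)} := by
        intro w hw
        by_cases hcw : ENNReal.ofReal (c w) ≤ E
        · exact Or.inl ⟨hw, hcw⟩
        · exact Or.inr hcw
      calc γ (blk ij) ≤ γ ((blk ij ∩ {z | ENNReal.ofReal (c z) ≤ E})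
            ∪ {z | ¬ (ENNReal.ofReal (c z) ≤ E)}) := measure_mono hsub
      _ ≤ γ (blk ij ∩ {z | ENNReal.ofReal (c z) ≤ E})
            + γ {z | ¬ (ENNReal.ofReal (c z) ≤ E)} := measure_union_le _ _
      _ = 0 := by rw [hzero, hEγ, add_zero]
    obtain ⟨z', hz'⟩ := nonempty_of_measure_ne_zero hgood
    have hdist : dist z z' < η := hblk_dist ij z hzb z' hz'.1
    have habs' : |c z - c z'| ≤ τ :=
      hcτ z (hblk_sub ij hzb) z' (hblk_sub ij hz'.1) hdist
    have hle : c z ≤ c z' + τ := by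
      have := (abs_le.mp habs').2
      linarith
    calc ENNReal.ofReal (c z) ≤ ENNReal.ofReal (c z' + τ) := ENNReal.ofReal_le_ofReal hle
    _ = ENNReal.ofReal (c z') + ENNReal.ofReal τ := ENNReal.ofReal_add (hc0 z') hτ
    _ ≤ E + ENNReal.ofReal τ := add_le_add hz'.2 le_rfl
  -- weak estimate
  have hUblk : (⋃ ij : ι, blk ij) = K ×ˢ L := by
    ext z
    constructor
    · rintro ⟨S, ⟨ij, rfl⟩, hzS⟩
      exact hblk_sub ij hzS
    · rintro ⟨hz1, hz2⟩
      rw [← hAU] at hz1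
      rw [← hBU] at hz2
      obtain ⟨S1, ⟨i, rfl⟩, hi⟩ := hz1
      obtain ⟨S2, ⟨j, rfl⟩, hj⟩ := hz2
      exact ⟨blk (i, j), ⟨(i, j), rfl⟩, ⟨hi, hj⟩⟩
  have hKL : γ ((K ×ˢ L)ᶜ) = 0 := by
    refine le_antisymm ?_ (zero_le)
    have hsub : (K ×ˢ L)ᶜ ⊆ Kᶜ ×ˢ Set.univ ∪ Set.univ ×ˢ Lᶜ := by
      intro w hw
      simp only [Set.mem_compl_iff, Set.mem_prod, not_and_or] at hw
      rcases hw with h | h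
      · exact Or.inl ⟨h, trivial⟩
      · exact Or.inr ⟨trivial, h⟩
    calc γ ((K ×ˢ L)ᶜ) ≤ γ (Kᶜ ×ˢ Set.univ ∪ Set.univ ×ˢ Lᶜ) := measure_mono hsub
    _ ≤ γ (Kᶜ ×ˢ Set.univ) + γ (Set.univ ×ˢ Lᶜ) := measure_union_le _ _
    _ = 0 := by rw [hfst _ hKm.compl, hsnd _ hLm.compl, hKc, hLc, add_zero]
  have hdisjblk : Pairwise (Function.onFun Disjoint blk) := fun ij kl h => hblkd ij kl h
  have hsum_mass : (∑ ij : ι, γ (blk ij)) = γ (K ×ˢ L) := by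
    rw [← hUblk, measure_iUnion hdisjblk hblkm, tsum_fintype]
  have hweak : ∀ (f : BoundedContinuousFunction (Rd d × Rd d) ℝ) (τf : ℝ), 0 ≤ τf →
      (∀ z ∈ K ×ˢ L, ∀ z' ∈ K ×ˢ L, dist z z' < η → |f z - f z'| ≤ τf) →
      |(∫ z, f z ∂γ') - ∫ z, f z ∂γ| ≤ 2 * τf := by
    intro f τf hτf hf
    have hsplitγ' : (∫ z, f z ∂γ') = ∑ ij : ι, ∫ z, f z ∂(coeff ij • pm ij) := by
      rw [hγ']
      exact integral_finset_sum_measure fun ij _ =>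
        (f.integrable _).smul_measure (hcoeff_ne_top ij)
    have hsplitγ : (∫ z, f z ∂γ) = ∑ ij : ι, ∫ z in blk ij, f z ∂γ := by
      have hres : γ.restrict (K ×ˢ L) = γ := by
        apply Measure.restrict_eq_self_of_ae_mem
        rw [ae_iff]
        exact hKL
      conv_lhs => rw [← hres]
      have : (∫ z in K ×ˢ L, f z ∂γ) = ∫ z in ⋃ ij ∈ (Finset.univ : Finset ι), blk ij, f z ∂γ := by
        rw [← hUblk]
        congr 1
        simp
      rw [this]
      exact integral_biUnion_finset Finset.univ (fun ij _ => hblkm ij)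
        ((Finset.coe_univ (α := ι)) ▸ (fun ij _ kl _ h => hblkd ij kl h))
        (fun ij _ => (f.integrable γ).integrableOn)
    have hblk_bnd : ∀ ij : ι, |(∫ z, f z ∂(coeff ij • pm ij)) - ∫ z in blk ij, f z ∂γ|
        ≤ 2 * τf * (γ (blk ij)).toReal := by
      intro ij
      by_cases h0 : γ (blk ij) = 0
      · have hc0' : coeff ij = 0 := hcoeff_zero ij h0
        have hr0 : γ.restrict (blk ij) = 0 := Measure.restrict_eq_zero.mpr h0
        rw [hc0', zero_smul, hr0]
        simp only [integral_zero_measure, sub_zero, abs_zero]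
        positivity
      · obtain ⟨z₀, hz₀⟩ := nonempty_of_measure_ne_zero h0
        set ρ' := coeff ij • pm ij with hρ'
        set m0 := (γ (blk ij)).toReal with hm0
        have hρ'univ : ρ' Set.univ = γ (blk ij) := by
          rw [hρ', Measure.smul_apply, smul_eq_mul, hpmdef]
          simp only
          rw [← Set.univ_prod_univ, Measure.prod_prod, Measure.restrict_apply_univ,
            Measure.restrict_apply_univ]
          exact hcoeff_mass ij
        haveI : IsFiniteMeasure ρ' := ⟨by rw [hρ'univ]; exact measure_lt_top γ _⟩
        have hρ'compl : ρ' (blk ij)ᶜ = 0 := by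
          rw [hρ', Measure.smul_apply, hpm ij, Measure.restrict_apply (hblkm ij).compl]
          simp
        have hae1 : ∀ᵐ z ∂ρ', z ∈ blk ij := by
          rw [ae_iff]
          exact hρ'compl
        have hae2 : ∀ᵐ z ∂(γ.restrict (blk ij)), z ∈ blk ij := ae_restrict_mem (hblkm ij)
        have key : ∀ (ρ₀ : Measure (Rd d × Rd d)) [IsFiniteMeasure ρ₀],
            ρ₀ Set.univ = γ (blk ij) → (∀ᵐ z ∂ρ₀, z ∈ blk ij) →
            |(∫ z, f z ∂ρ₀) - f z₀ * m0| ≤ τf * m0 := by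
          intro ρ₀ _ huniv hae
          have hint : Integrable (fun z => f z - f z₀) ρ₀ :=
            (f.integrable _).sub (integrable_const _)
          have heq : (∫ z, f z ∂ρ₀) - f z₀ * m0 = ∫ z, (f z - f z₀) ∂ρ₀ := by
            rw [integral_sub (f.integrable _) (integrable_const _), integral_const, measureReal_def, huniv,
              hm0, smul_eq_mul, mul_comm]
          rw [heq]
          have hb : ∀ᵐ z ∂ρ₀, ‖f z - f z₀‖ ≤ τf := by
            filter_upwards [hae] with z hz
            rw [Real.norm_eq_abs]
            exact hf z (hblk_sub ij hz) z₀ (hblk_sub ij hz₀) (hblk_dist ij z hz z₀ hz₀)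
          calc |∫ z, (f z - f z₀) ∂ρ₀| ≤ τf * (ρ₀ Set.univ).toReal :=
                norm_integral_le_of_norm_le_const hb
          _ = τf * m0 := by rw [huniv, hm0]
        have h1 := key ρ' hρ'univ hae1
        have h2 := key (γ.restrict (blk ij)) (by rw [Measure.restrict_apply_univ]) hae2
        calc |(∫ z, f z ∂ρ') - ∫ z in blk ij, f z ∂γ|
            ≤ |(∫ z, f z ∂ρ') - f z₀ * m0| + |f z₀ * m0 - ∫ z in blk ij, f z ∂γ| :=
              abs_sub_le _ _ _
        _ ≤ τf * m0 + τf * m0 := by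
              refine add_le_add h1 ?_
              rw [abs_sub_comm]
              exact h2
        _ = 2 * τf * m0 := by ring
    calc |(∫ z, f z ∂γ') - ∫ z, f z ∂γ|
        = |∑ ij : ι, ((∫ z, f z ∂(coeff ij • pm ij)) - ∫ z in blk ij, f z ∂γ)| := by
          rw [hsplitγ', hsplitγ, Finset.sum_sub_distrib]
    _ ≤ ∑ ij : ι, |(∫ z, f z ∂(coeff ij • pm ij)) - ∫ z in blk ij, f z ∂γ| :=
          Finset.abs_sum_le_sum_abs _ _
    _ ≤ ∑ ij : ι, 2 * τf * (γ (blk ij)).toReal :=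
          Finset.sum_le_sum fun ij _ => hblk_bnd ij
    _ = 2 * τf * (∑ ij : ι, (γ (blk ij)).toReal) := by rw [Finset.mul_sum]
    _ = 2 * τf * (γ (K ×ˢ L)).toReal := by
          rw [← ENNReal.toReal_sum (fun ij _ => measure_ne_top γ _), hsum_mass]
    _ ≤ 2 * τf * 1 := by
          apply mul_le_mul_of_nonneg_left _ (by linarith)
          have h1 : γ (K ×ˢ L) ≤ 1 := le_trans (measure_mono (Set.subset_univ _)) measure_univ.le
          calc (γ (K ×ˢ L)).toReal ≤ (1 : ℝ≥0∞).toReal :=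
                ENNReal.toReal_mono (by simp) h1
          _ = 1 := by simp
    _ = 2 * τf := by ring
  exact ⟨γ', hγ'P, hγ'C, ⟨max Creal 1, le_max_right _ _, hEnt⟩, hcost, hweak⟩





/-- (Γ-limsup inequality, general case) If ε_p^{1/p} → 0 as p → ∞, then for every γ ∈ Π(μ,ν)
    there is a recovery family γ_p ∈ Π(μ,ν) converging weakly-star to γ with
    limsup_{p→∞} J_{p,ε_p}(γ_p) ≤ J_∞(γ). -/

theorem gamma_limsup_general {d : ℕ} (c : Rd d × Rd d → ℝ) (hc : Continuous c)
    (hc0 : ∀ z, 0 ≤ c z)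
    (μ ν : Measure (Rd d)) [IsProbabilityMeasure μ] [IsProbabilityMeasure ν]
    (hμ : IsCompact (msupport μ)) (hν : IsCompact (msupport ν))
    (ε : ℝ → ℝ) (hε : ∀ p, 0 < ε p)
    (hε0 : Tendsto (fun p : ℝ => ε p ^ (1 / p)) atTop (nhds 0))
    (γ : Measure (Rd d × Rd d)) (hγP : IsProbabilityMeasure γ) (hγC : IsCoupling γ μ ν) :
    ∃ γseq : ℝ → Measure (Rd d × Rd d),
      (∀ p, IsProbabilityMeasure (γseq p) ∧ IsCoupling (γseq p) μ ν) ∧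
      WeakStarTendsto γseq γ ∧
      Filter.limsup (fun p => Jpe c μ ν p (ε p) (γseq p)) atTop ≤ Jinf c μ ν γ := by
  classical
  set K := msupport μ with hKdef
  set L := msupport ν with hLdef
  have hKL : IsCompact (K ×ˢ L) := hμ.prod hν
  -- moduli of continuity of c
  have huc : ∀ k : ℕ, ∃ ηk : ℝ, 0 < ηk ∧ ηk ≤ 1 / (k + 1) ∧
      ∀ z ∈ K ×ˢ L, ∀ z' ∈ K ×ˢ L, dist z z' < ηk → |c z - c z'| ≤ 1 / (k + 1) := by
    intro k
    have hkpos : (0 : ℝ) < 1 / (k + 1) := by positivity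
    have huc' := Metric.uniformContinuousOn_iff.mp
      (hKL.uniformContinuousOn_of_continuous hc.continuousOn)
    obtain ⟨δ, hδ, hδ'⟩ := huc' (1 / (k + 1)) hkpos
    refine ⟨min δ (1 / (k + 1)), lt_min hδ hkpos, min_le_right _ _, ?_⟩
    intro z hz z' hz' hd
    have := hδ' z hz z' hz' (lt_of_lt_of_le hd (min_le_left _ _))
    rw [Real.dist_eq] at this
    exact this.le
  choose η hηpos hηsmall hηmod using huc
  -- stage-k block approximations
  have hstage : ∀ k : ℕ, ∃ (γ' : Measure (Rd d × Rd d)) (Lc : ℝ),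
      IsProbabilityMeasure γ' ∧ IsCoupling γ' μ ν ∧ 1 ≤ Lc ∧
      relEntropy γ' (μ.prod ν) ≤ ENNReal.ofReal Lc ∧
      (∀ᵐ z ∂γ', ENNReal.ofReal (c z)
          ≤ essSup (fun z => ENNReal.ofReal (c z)) γ + ENNReal.ofReal (1 / (k + 1))) ∧
      (∀ (f : BoundedContinuousFunction (Rd d × Rd d) ℝ) (τf : ℝ), 0 ≤ τf →
        (∀ z ∈ K ×ˢ L, ∀ z' ∈ K ×ˢ L, dist z z' < η k → |f z - f z'| ≤ τf) →
        |(∫ z, f z ∂γ') - ∫ z, f z ∂γ| ≤ 2 * τf) := by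
    intro k
    have hkpos : (0 : ℝ) < 1 / (k + 1) := by positivity
    obtain ⟨γ', h1, h2, ⟨Lc, hLc1, hLc2⟩, h4, h5⟩ :=
      block_approx c hc0 μ ν hμ hν γ hγC (η k) (1 / (k + 1)) (hηpos k) hkpos.le (hηmod k)
    exact ⟨γ', Lc, h1, h2, hLc1, hLc2, h4, h5⟩
  choose γb Lc hPb hCb hLc1 hEntb hcostb hweakb using hstage
  set E := essSup (fun z => ENNReal.ofReal (c z)) γ with hEdef
  -- thresholds
  have hthr : ∀ k : ℕ, ∃ P : ℝ, ∀ p : ℝ, P ≤ p →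
      1 ≤ p ∧ (k : ℝ) ≤ p ∧ (ε p * Lc k) ^ (1 / p) ≤ 1 / (k + 1) := by
    intro k
    have hLpos : (0 : ℝ) < Lc k := lt_of_lt_of_le zero_lt_one (hLc1 k)
    have hB : Tendsto (fun p : ℝ => (Lc k) ^ (1 / p)) atTop (nhds 1) := by
      have h1p : Tendsto (fun p : ℝ => 1 / p) atTop (nhds 0) := by
        simpa [one_div] using tendsto_inv_atTop_zero
      have hexp : Tendsto (fun p : ℝ => Real.exp ((1 / p) * Real.log (Lc k)))
          atTop (nhds 1) := by
        have h2 := h1p.mul_const (Real.log (Lc k))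
        rw [zero_mul] at h2
        have h3 := (Real.continuous_exp.tendsto 0).comp h2
        simpa [Function.comp_def] using h3
      refine hexp.congr (fun p => ?_)
      rw [Real.rpow_def_of_pos hLpos, mul_comm]
    have hT : Tendsto (fun p : ℝ => (ε p * Lc k) ^ (1 / p)) atTop (nhds 0) := by
      have hmul := hε0.mul hB
      rw [zero_mul] at hmul
      refine hmul.congr (fun p => ?_)
      rw [← Real.mul_rpow (hε p).le hLpos.le]
    have hklt : (0 : ℝ) < 1 / (k + 1) := by positivity
    have hev : ∀ᶠ p : ℝ in atTop,
        1 ≤ p ∧ (k : ℝ) ≤ p ∧ (ε p * Lc k) ^ (1 / p) ≤ 1 / (k + 1) := by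
      filter_upwards [eventually_ge_atTop (1 : ℝ), eventually_ge_atTop ((k : ℝ)),
        hT.eventually (eventually_lt_nhds hklt)] with p h1 h2 h3
      exact ⟨h1, h2, h3.le⟩
    obtain ⟨P, hP⟩ := eventually_atTop.mp hev
    exact ⟨P, hP⟩
  choose thr hthr' using hthr
  set N : ℝ → ℕ := fun p => Nat.findGreatest (fun k => thr k ≤ p) ⌈p⌉₊ with hNdef
  have hNwit : ∀ (k : ℕ) (p : ℝ), thr k ≤ p → (k : ℝ) ≤ p → (k ≤ N p ∧ thr (N p) ≤ p) := by
    intro k p h1 h2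
    have h3 : k ≤ ⌈p⌉₊ := by
      have := h2.trans (Nat.le_ceil p)
      exact_mod_cast this
    exact ⟨Nat.le_findGreatest h3 h1, Nat.findGreatest_spec (P := fun k => thr k ≤ p) h3 h1⟩
  have hNge : ∀ k : ℕ, ∀ᶠ p : ℝ in atTop, k ≤ N p := by
    intro k
    filter_upwards [eventually_ge_atTop (max (thr k) (k : ℝ))] with p hp
    exact (hNwit k p (le_trans (le_max_left _ _) hp) (le_trans (le_max_right _ _) hp)).1
  have hNtend : Tendsto N atTop atTop := tendsto_atTop.mpr hNge
  refine ⟨fun p => γb (N p), fun p => ⟨hPb _, hCb _⟩, ?_, ?_⟩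
  · -- weak-star convergence
    intro f
    have hseq : Tendsto (fun k : ℕ => ∫ z, f z ∂(γb k)) atTop (nhds (∫ z, f z ∂γ)) := by
      rw [Metric.tendsto_atTop]
      intro δ hδ
      obtain ⟨ηf, hηf, hηf'⟩ := Metric.uniformContinuousOn_iff.mp
        (hKL.uniformContinuousOn_of_continuous f.continuous.continuousOn) (δ / 4)
        (by linarith)
      obtain ⟨k₀, hk₀⟩ := exists_nat_one_div_lt (ε := ηf) hηf
      refine ⟨k₀, fun k hk => ?_⟩
      have hmod : ∀ z ∈ K ×ˢ L, ∀ z' ∈ K ×ˢ L, dist z z' < η k → |f z - f z'| ≤ δ / 4 := by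
        intro z hz z' hz' hd
        have hd' : dist z z' < ηf := by
          have h1 : η k ≤ 1 / ((k : ℝ) + 1) := hηsmall k
          have h2 : 1 / ((k : ℝ) + 1) ≤ 1 / ((k₀ : ℝ) + 1) := by
            apply one_div_le_one_div_of_le (by positivity)
            have : (k₀ : ℝ) ≤ k := by exact_mod_cast hk
            linarith
          linarith
        have := hηf' z hz z' hz' hd'
        rw [Real.dist_eq] at this
        linarith
      have hwb := hweakb k f (δ / 4) (by linarith) hmod
      rw [Real.dist_eq]
      calc |(∫ z, f z ∂(γb k)) - ∫ z, f z ∂γ| ≤ 2 * (δ / 4) := hwb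
      _ < δ := by linarith
    exact hseq.comp hNtend
  · -- limsup bound
    have hbound : ∀ k : ℕ, Filter.limsup (fun p => Jpe c μ ν p (ε p) (γb (N p))) atTop
        ≤ E + ENNReal.ofReal (1 / (k + 1)) + ENNReal.ofReal (1 / (k + 1)) := by
      intro k
      refine Filter.limsup_le_of_le (by isBoundedDefault) ?_
      filter_upwards [eventually_ge_atTop (max (thr k) (k : ℝ))] with p hp
      obtain ⟨hkN, hthrN⟩ :=
        hNwit k p (le_trans (le_max_left _ _) hp) (le_trans (le_max_right _ _) hp)
      set q := N p with hqdef
      obtain ⟨hp1, hqp, hεq⟩ := hthr' q p hthrN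
      have hppos : (0 : ℝ) < p := lt_of_lt_of_le zero_lt_one hp1
      have hinvp : (0 : ℝ) ≤ 1 / p := by positivity
      rw [Jpe, if_pos (hCb q)]
      have hlint : (∫⁻ z, ENNReal.ofReal (c z ^ p) ∂(γb q))
          ≤ (E + ENNReal.ofReal (1 / (q + 1))) ^ p := by
        have hmono : ∀ᵐ z ∂(γb q),
            ENNReal.ofReal (c z ^ p) ≤ (E + ENNReal.ofReal (1 / (q + 1))) ^ p := by
          filter_upwards [hcostb q] with z hz
          rw [← ENNReal.ofReal_rpow_of_nonneg (hc0 z) hppos.le]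
          exact ENNReal.rpow_le_rpow hz hppos.le
        calc (∫⁻ z, ENNReal.ofReal (c z ^ p) ∂(γb q))
            ≤ ∫⁻ _, (E + ENNReal.ofReal (1 / (q + 1))) ^ p ∂(γb q) := lintegral_mono_ae hmono
        _ = (E + ENNReal.ofReal (1 / (q + 1))) ^ p := by
            haveI := hPb q
            rw [lintegral_const, measure_univ, mul_one]
      have hent : ENNReal.ofReal (ε p) * relEntropy (γb q) (μ.prod ν)
          ≤ ENNReal.ofReal (ε p * Lc q) := by
        rw [ENNReal.ofReal_mul (hε p).le]
        exact mul_le_mul_right (hEntb q) _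
      have hq1 : 1 / ((q : ℝ) + 1) ≤ 1 / ((k : ℝ) + 1) := by
        apply one_div_le_one_div_of_le (by positivity)
        have : (k : ℝ) ≤ q := by exact_mod_cast hkN
        linarith
      calc (∫⁻ z, ENNReal.ofReal (c z ^ p) ∂(γb q)
            + ENNReal.ofReal (ε p) * relEntropy (γb q) (μ.prod ν)) ^ (1 / p)
          ≤ ((E + ENNReal.ofReal (1 / (q + 1))) ^ p
            + ENNReal.ofReal (ε p * Lc q)) ^ (1 / p) :=
            ENNReal.rpow_le_rpow (add_le_add hlint hent) hinvp
      _ ≤ (((E + ENNReal.ofReal (1 / (q + 1))) ^ p) ^ (1 / p)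
            + (ENNReal.ofReal (ε p * Lc q)) ^ (1 / p)) := by
            apply ENNReal.rpow_add_le_add_rpow _ _ hinvp
            rw [div_le_one hppos]
            exact hp1
      _ = (E + ENNReal.ofReal (1 / (q + 1))) + (ENNReal.ofReal (ε p * Lc q)) ^ (1 / p) := by
            rw [← ENNReal.rpow_mul, mul_one_div_cancel hppos.ne', ENNReal.rpow_one]
      _ ≤ (E + ENNReal.ofReal (1 / (q + 1))) + ENNReal.ofReal (1 / (q + 1)) := by
            have hpos : (0 : ℝ) < ε p * Lc q :=
              mul_pos (hε p) (lt_of_lt_of_le zero_lt_one (hLc1 q))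
            rw [ENNReal.ofReal_rpow_of_pos hpos]
            exact add_le_add le_rfl (ENNReal.ofReal_le_ofReal hεq)
      _ ≤ E + ENNReal.ofReal (1 / (k + 1)) + ENNReal.ofReal (1 / (k + 1)) :=
            add_le_add (add_le_add le_rfl (ENNReal.ofReal_le_ofReal hq1))
              (ENNReal.ofReal_le_ofReal hq1)
    have hJ : Jinf c μ ν γ = E := by rw [Jinf, if_pos hγC]
    rw [hJ]
    apply ENNReal.le_of_forall_pos_le_add
    intro δ hδ _
    have hδR : (0 : ℝ) < (δ : ℝ) := hδ
    obtain ⟨k, hk⟩ := exists_nat_one_div_lt (ε := (δ : ℝ) / 2) (by linarith)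
    calc Filter.limsup (fun p => Jpe c μ ν p (ε p) (γb (N p))) atTop
        ≤ E + ENNReal.ofReal (1 / (k + 1)) + ENNReal.ofReal (1 / (k + 1)) := hbound k
    _ ≤ E + (δ : ℝ≥0∞) := by
        rw [add_assoc]
        apply add_le_add le_rfl
        rw [← ENNReal.ofReal_add (by positivity) (by positivity)]
        have h2 : (1 : ℝ) / (k + 1) + 1 / (k + 1) ≤ (δ : ℝ) := by
          have := hk
          push_cast at this ⊢
          linarith
        calc ENNReal.ofReal (1 / (k + 1) + 1 / (k + 1)) ≤ ENNReal.ofReal (δ : ℝ) :=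
              ENNReal.ofReal_le_ofReal h2
        _ = (δ : ℝ≥0∞) := ENNReal.ofReal_coe_nnreal
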